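/- Let f(w,x,y,z) = w·x·y^2 + w·(y+z)·x^2 + ((x+y+z)^2/2 − x^2/2 − y^2/2)·w^2 on the simplex R = {(w,x,y,z) : w,x,y,z ≥ 0, w+x+y+z = 1}. Then the maximum of f on R is 1/27, attained uniquely at (1/3, 1/3, 1/3, 0). -/
import Mathlib


set_option maxHeartbeats 4000000 in
set_option maxRecDepth 100000 in
/-- On the simplex `{w,x,y,z ≥ 0, w+x+y+z = 1}` the polynomial
`f(w,x,y,z) = wxy² + w(y+z)x² + ((x+y+z)²/2 − x²/2 − y²/2)w²` has maximum `1/27`,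
attained uniquely at `(1/3, 1/3, 1/3, 0)`. -/
theorem f_max_on_simplex (w x y z : ℝ)
    (hw : 0 ≤ w) (hx : 0 ≤ x) (hy : 0 ≤ y) (hz : 0 ≤ z) (hsum : w + x + y + z = 1) :
    w * x * y ^ 2 + w * (y + z) * x ^ 2 +
        ((x + y + z) ^ 2 / 2 - x ^ 2 / 2 - y ^ 2 / 2) * w ^ 2 ≤ 1 / 27 ∧
    (w * x * y ^ 2 + w * (y + z) * x ^ 2 +
        ((x + y + z) ^ 2 / 2 - x ^ 2 / 2 - y ^ 2 / 2) * w ^ 2 = 1 / 27 ↔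
      w = 1 / 3 ∧ x = 1 / 3 ∧ y = 1 / 3 ∧ z = 0) := by
  have ht0 : (0:ℝ) ≤ x * ((w-x)*w - ((x-y)*w))^2 := mul_nonneg hx (sq_nonneg _)
  have ht1 : (0:ℝ) ≤ z * (w*z - ((w-y)*w))^2 := mul_nonneg hz (sq_nonneg _)
  have ht2 : (0:ℝ) ≤ y * (x*z - (w*y-x^2))^2 := mul_nonneg hy (sq_nonneg _)
  have ht3 : (0:ℝ) ≤ y * (x*z + (y*z))^2 := mul_nonneg hy (sq_nonneg _)
  have ht4 : (0:ℝ) ≤ z * (w*z + (x*y-w^2))^2 := mul_nonneg hz (sq_nonneg _)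
  have ht5 : (0:ℝ) ≤ w * ((w-y)*z + (x*y-w^2))^2 := mul_nonneg hw (sq_nonneg _)
  have ht6 : (0:ℝ) ≤ w * (x*z - ((w-y)*x))^2 := mul_nonneg hw (sq_nonneg _)
  have ht7 : (0:ℝ) ≤ w * ((w-x)*x - ((x-y)*x))^2 := mul_nonneg hw (sq_nonneg _)
  have ht8 : (0:ℝ) ≤ z * ((w-x)*y - ((x-y)*y))^2 := mul_nonneg hz (sq_nonneg _)
  have ht9 : (0:ℝ) ≤ x * ((w-x)*y + ((x-y)*x))^2 := mul_nonneg hx (sq_nonneg _)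
  have ht10 : (0:ℝ) ≤ y * (z*z - ((w-x)*w))^2 := mul_nonneg hy (sq_nonneg _)
  have ht11 : (0:ℝ) ≤ w * (w*z - ((w-y)*w))^2 := mul_nonneg hw (sq_nonneg _)
  have ht12 : (0:ℝ) ≤ y * (z*z - ((w-y)*w))^2 := mul_nonneg hy (sq_nonneg _)
  have ht13 : (0:ℝ) ≤ z * ((w-y)*z - (w*x-y^2))^2 := mul_nonneg hz (sq_nonneg _)
  have ht14 : (0:ℝ) ≤ z * (x*z - ((x-y)*w))^2 := mul_nonneg hz (sq_nonneg _)
  have ht15 : (0:ℝ) ≤ z * (y*z + (w*x-y^2))^2 := mul_nonneg hz (sq_nonneg _)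
  have ht16 : (0:ℝ) ≤ z * w * x * z * z := (mul_nonneg (mul_nonneg (mul_nonneg (mul_nonneg hz hw) hx) hz) hz)
  have ht17 : (0:ℝ) ≤ z * ((x-y)*y + ((w-y)*y))^2 := mul_nonneg hz (sq_nonneg _)
  have ht18 : (0:ℝ) ≤ w * (z*z - ((w-x)*y))^2 := mul_nonneg hw (sq_nonneg _)
  have ht19 : (0:ℝ) ≤ y * ((x-y)*w + ((w-y)*x))^2 := mul_nonneg hy (sq_nonneg _)
  have ht20 : (0:ℝ) ≤ z * ((w-x)*y + (w*y-x^2))^2 := mul_nonneg hz (sq_nonneg _)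
  have ht21 : (0:ℝ) ≤ x * ((w-x)*w - ((w-y)*x))^2 := mul_nonneg hx (sq_nonneg _)
  have ht22 : (0:ℝ) ≤ y * ((w-y)*y + (w*y-x^2))^2 := mul_nonneg hy (sq_nonneg _)
  have ht23 : (0:ℝ) ≤ x * (w*z - ((w-x)*w))^2 := mul_nonneg hx (sq_nonneg _)
  have ht24 : (0:ℝ) ≤ x * ((w-x)*z - ((x-y)*z))^2 := mul_nonneg hx (sq_nonneg _)
  have ht25 : (0:ℝ) ≤ x * ((x-y)*w - ((x-y)*z))^2 := mul_nonneg hx (sq_nonneg _)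
  have ht26 : (0:ℝ) ≤ z * w * y * z * z := (mul_nonneg (mul_nonneg (mul_nonneg (mul_nonneg hz hw) hy) hz) hz)
  have ht27 : (0:ℝ) ≤ x * (y*z - ((x-y)*y))^2 := mul_nonneg hx (sq_nonneg _)
  have ht28 : (0:ℝ) ≤ y * (x*z - ((w-y)*x))^2 := mul_nonneg hy (sq_nonneg _)
  have ht29 : (0:ℝ) ≤ w * (z*z - ((w-x)*w))^2 := mul_nonneg hw (sq_nonneg _)
  have ht30 : (0:ℝ) ≤ z * x * y * y * y := (mul_nonneg (mul_nonneg (mul_nonneg (mul_nonneg hz hx) hy) hy) hy)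
  have ht31 : (0:ℝ) ≤ y * ((x-y)*y - ((w-y)*x))^2 := mul_nonneg hy (sq_nonneg _)
  have ht32 : (0:ℝ) ≤ x * ((x-y)*x - ((x-y)*z))^2 := mul_nonneg hx (sq_nonneg _)
  have ht33 : (0:ℝ) ≤ x * (z*z + ((w-x)*z))^2 := mul_nonneg hx (sq_nonneg _)
  have ht34 : (0:ℝ) ≤ y * ((w-x)*y - ((x-y)*w))^2 := mul_nonneg hy (sq_nonneg _)
  have ht35 : (0:ℝ) ≤ x * ((w-x)*y + ((w-y)*x))^2 := mul_nonneg hx (sq_nonneg _)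
  have ht36 : (0:ℝ) ≤ w * ((w-y)*x - ((w-y)*z))^2 := mul_nonneg hw (sq_nonneg _)
  have ht37 : (0:ℝ) ≤ w * (z*z - ((w-x)*z))^2 := mul_nonneg hw (sq_nonneg _)
  have ht38 : (0:ℝ) ≤ y * (w*z - ((w-y)*w))^2 := mul_nonneg hy (sq_nonneg _)
  have ht39 : (0:ℝ) ≤ z * ((w-x)*x + (w*y-x^2))^2 := mul_nonneg hz (sq_nonneg _)
  have ht40 : (0:ℝ) ≤ w * (y*z - ((w-x)*y))^2 := mul_nonneg hw (sq_nonneg _)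
  have ht41 : (0:ℝ) ≤ w * (y*z - ((w-y)*y))^2 := mul_nonneg hw (sq_nonneg _)
  have ht42 : (0:ℝ) ≤ w * (y*z - ((w-y)*z))^2 := mul_nonneg hw (sq_nonneg _)
  have ht43 : (0:ℝ) ≤ w * ((x-y)*x - (w*y-x^2))^2 := mul_nonneg hw (sq_nonneg _)
  have ht44 : (0:ℝ) ≤ z * (y*z - ((x-y)*z))^2 := mul_nonneg hz (sq_nonneg _)
  have ht45 : (0:ℝ) ≤ x * (w*z - ((w-y)*w))^2 := mul_nonneg hx (sq_nonneg _)
  have ht46 : (0:ℝ) ≤ z * w * x * y * y := (mul_nonneg (mul_nonneg (mul_nonneg (mul_nonneg hz hw) hx) hy) hy)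
  have ht47 : (0:ℝ) ≤ x * ((w-x)*x + (w*y-x^2))^2 := mul_nonneg hx (sq_nonneg _)
  have ht48 : (0:ℝ) ≤ y * ((x-y)*w + ((x-y)*z))^2 := mul_nonneg hy (sq_nonneg _)
  have ht49 : (0:ℝ) ≤ z * (x*z + (y*z))^2 := mul_nonneg hz (sq_nonneg _)
  have ht50 : (0:ℝ) ≤ w * (x*z + (y*z))^2 := mul_nonneg hw (sq_nonneg _)
  have ht51 : (0:ℝ) ≤ x * (z*z - ((x-y)*z))^2 := mul_nonneg hx (sq_nonneg _)
  have ht52 : (0:ℝ) ≤ z * (w*z - (z*z))^2 := mul_nonneg hz (sq_nonneg _)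
  have key : 1/27 - (w * x * y ^ 2 + w * (y + z) * x ^ 2 + ((x + y + z) ^ 2 / 2 - x ^ 2 / 2 - y ^ 2 / 2) * w ^ 2) = (1/1000) * ((w - 1/3)^2 + (x - 1/3)^2 + (y - 1/3)^2 + z) + ((12000711957791/143319457323000) * (x * ((w-x)*w - ((x-y)*w))^2) + (41246490776941/286638914646000) * (z * (w*z - ((w-y)*w))^2) + (5230876929853/20474208189000) * (y * (x*z - (w*y-x^2))^2) + (16848946423697/38218521952800) * (y * (x*z + (y*z))^2) + (28089001253251/286638914646000) * (z * (w*z + (x*y-w^2))^2) + (183396445511/8189683275600) * (w * ((w-y)*z + (x*y-w^2))^2) + (471697548912523/573277829292000) * (w * (x*z - ((w-y)*x))^2) + (4242324703739/114655565858400) * (w * ((w-x)*x - ((x-y)*x))^2) + (8812677270899/343966697575200) * (z * ((w-x)*y - ((x-y)*y))^2) + (1788551400359/286638914646000) * (x * ((w-x)*y + ((x-y)*x))^2) + (90747931069603/573277829292000) * (y * (z*z - ((w-x)*w))^2) + (106909427459/14331945732300) * (w * (w*z - ((w-y)*w))^2) + (12548240763937/573277829292000) * (y * (z*z - ((w-y)*w))^2)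 + (2999169306913/47773152441000) * (z * ((w-y)*z - (w*x-y^2))^2) + (67670024610479/143319457323000) * (z * (x*z - ((x-y)*w))^2) + (27366479741507/573277829292000) * (z * (y*z + (w*x-y^2))^2) + (1247419769639/10616256098000) * (z * w * x * z * z) + (9899407731061/859916743938000) * (z * ((x-y)*y + ((w-y)*y))^2) + (1788608274829/286638914646000) * (w * (z*z - ((w-x)*y))^2) + (333902584021/47773152441000) * (y * ((x-y)*w + ((w-y)*x))^2) + (1606072558211/28663891464600) * (z * ((w-x)*y + (w*y-x^2))^2) + (373372675099/19109260976400) * (x * ((w-x)*w - ((w-y)*x))^2) + (328833186247/35829864330750) * (y * ((w-y)*y + (w*y-x^2))^2) + (35126694189467/573277829292000) * (x * (w*z - ((w-x)*w))^2) + (3276260126551/114655565858400) * (x * ((w-x)*z - ((x-y)*z))^2) + (11931673186957/286638914646000) * (x * ((x-y)*w - ((x-y)*z))^2) + (61123325361919/71659728661500) * (z * w * y * z * z) + (10484635907939/35829864330750) * (x * (y*z - ((x-y)*y))^2) + (21185327264989/28663891464600) * (y * (x*z - ((w-y)*x))^2) + (69188864673/10616256098000) * (w * (z*z - ((w-x)*w))^2)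 + (42712957578089/143319457323000) * (z * x * y * y * y) + (43302766657/1592438414700) * (y * ((x-y)*y - ((w-y)*x))^2) + (1600964163601/57327782929200) * (x * ((x-y)*x - ((x-y)*z))^2) + (37903895879039/573277829292000) * (x * (z*z + ((w-x)*z))^2) + (5857407942563/71659728661500) * (y * ((w-x)*y - ((x-y)*w))^2) + (24717862237/21232512196000) * (x * ((w-x)*y + ((w-y)*x))^2) + (11183533166191/286638914646000) * (w * ((w-y)*x - ((w-y)*z))^2) + (4889965718051/20474208189000) * (w * (z*z - ((w-x)*z))^2) + (2663693226031/143319457323000) * (y * (w*z - ((w-y)*w))^2) + (8695046633327/191092609764000) * (z * ((w-x)*x + (w*y-x^2))^2) + (118598036216347/573277829292000) * (w * (y*z - ((w-x)*y))^2) + (292693320511/1327032012250) * (w * (y*z - ((w-y)*y))^2) + (7617394627999/143319457323000) * (w * (y*z - ((w-y)*z))^2) + (1817939917159/191092609764000) * (w * ((x-y)*x - (w*y-x^2))^2) + (731243350373/1719833487876000) * (z * (y*z - ((x-y)*z))^2) + (18539865652027/573277829292000) * (x * (w*z - ((w-y)*w))^2) + (93909134586937/35829864330750) * (z * w * x * y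 * y) + (5640993481/10237104094500) * (x * ((w-x)*x + (w*y-x^2))^2) + (2362091110513/16379366551200) * (y * ((x-y)*w + ((x-y)*z))^2) + (430795468131403/1719833487876000) * (z * (x*z + (y*z))^2) + (130321526962183/573277829292000) * (w * (x*z + (y*z))^2) + (2421936146463/21232512196000) * (x * (z*z - ((x-y)*z))^2) + (241/6750) * (z * (w*z - (z*z))^2)) := by
    linear_combination ((-491/13500) * w^4 + (-1991/13500) * w^3*x + (-1991/13500) * w^3*y + (-3937/27000) * w^3*z + (-491/13500) * w^3 + (-2/9) * w^2*x^2 + (2491/4500) * w^2*x*y + (5027/9000) * w^2*x*z + (-1/9) * w^2*x + (-2/9) * w^2*y^2 + (5027/9000) * w^2*y*z + (-1/9) * w^2*y + (317/1125) * w^2*z^2 + (-197/1800) * w^2*z + (-491/13500) * w^2 + (-1991/13500) * w*x^3 + (2491/4500) * w*x^2*y + (5027/9000) * w*x^2*z + (-1/9) * w*x^2 + (2491/4500) * w*x*y^2 + (-3991/4500) * w*x*y*z + (-1009/4500) * w*x*y + (-1973/4500) * w*x*z^2 + (-497/2250) * w*x*z + (-1009/13500) * w*x + (-1991/13500) * w*y^3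 + (-3973/9000) * w*y^2*z + (-1/9) * w*y^2 + (-1973/4500) * w*y*z^2 + (-497/2250) * w*y*z + (-1009/13500) * w*y + (-3901/27000) * w*z^3 + (-979/9000) * w*z^2 + (-1973/27000) * w*z + (-1009/27000) * w + (-491/13500) * x^4 + (-1991/13500) * x^3*y + (-3937/27000) * x^3*z + (-491/13500) * x^3 + (-2/9) * x^2*y^2 + (-3973/9000) * x^2*y*z + (-1/9) * x^2*y + (-491/2250) * x^2*z^2 + (-197/1800) * x^2*z + (-491/13500) * x^2 + (-1991/13500) * x*y^3 + (-3973/9000) * x*y^2*z + (-1/9) * x*y^2 + (-1973/4500) * x*y*z^2 + (-497/2250) * x*y*z + (-1009/13500) * x*y + (-3901/27000) * x*z^3 + (-979/9000) * x*z^2 + (-1973/27000) * x*z + (-1009/27000) * x + (-491/13500) * y^4 + (-3937/27000) * y^3*z + (-491/13500) * y^3 + (-491/2250) * y^2*z^2 + (-197/1800) * y^2*z + (-491/13500) * y^2 + (-3901/27000) * y*z^3 + (-979/9000) * y*z^2 + (-1973/27000) * y*z + (-1009/27000) * y + (-241/6750) * z^4 + (-241/6750) * z^3 + (-241/6750) *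 z^2 + (-241/6750) * z + (-991/27000)) * hsum
  constructor
  · linarith [sq_nonneg (w - 1/3), sq_nonneg (x - 1/3), sq_nonneg (y - 1/3), key, ht0, ht1, ht2, ht3, ht4, ht5, ht6, ht7, ht8, ht9, ht10, ht11, ht12, ht13, ht14, ht15, ht16, ht17, ht18, ht19, ht20, ht21, ht22, ht23, ht24, ht25, ht26, ht27, ht28, ht29, ht30, ht31, ht32, ht33, ht34, ht35, ht36, ht37, ht38, ht39, ht40, ht41, ht42, ht43, ht44, ht45, ht46, ht47, ht48, ht49, ht50, ht51, ht52]
  · constructor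
    · intro heq
      have hw3 : (w - 1/3)^2 ≤ 0 := by linarith [sq_nonneg (x - 1/3), sq_nonneg (y - 1/3), key, ht0, ht1, ht2, ht3, ht4, ht5, ht6, ht7, ht8, ht9, ht10, ht11, ht12, ht13, ht14, ht15, ht16, ht17, ht18, ht19, ht20, ht21, ht22, ht23, ht24, ht25, ht26, ht27, ht28, ht29, ht30, ht31, ht32, ht33, ht34, ht35, ht36, ht37, ht38, ht39, ht40, ht41, ht42, ht43, ht44, ht45, ht46, ht47, ht48, ht49, ht50, ht51, ht52]
      have hx3 : (x - 1/3)^2 ≤ 0 := by linarith [sq_nonneg (w - 1/3), sq_nonneg (y - 1/3), key, ht0, ht1, ht2, ht3, ht4, ht5, ht6, ht7, ht8, ht9, ht10, ht11, ht12, ht13, ht14, ht15, ht16, ht17, ht18, ht19, ht20, ht21, ht22, ht23, ht24, ht25, ht26, ht27, ht28, ht29, ht30, ht31, ht32, ht33, ht34, ht35, ht36, ht37, ht38, ht39, ht40, ht41, ht42, ht43, ht44, ht45, ht46, ht47, ht48, ht49, ht50, ht51, ht52]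
      have hy3 : (y - 1/3)^2 ≤ 0 := by linarith [sq_nonneg (w - 1/3), sq_nonneg (x - 1/3), key, ht0, ht1, ht2, ht3, ht4, ht5, ht6, ht7, ht8, ht9, ht10, ht11, ht12, ht13, ht14, ht15, ht16, ht17, ht18, ht19, ht20, ht21, ht22, ht23, ht24, ht25, ht26, ht27, ht28, ht29, ht30, ht31, ht32, ht33, ht34, ht35, ht36, ht37, ht38, ht39, ht40, ht41, ht42, ht43, ht44, ht45, ht46, ht47, ht48, ht49, ht50, ht51, ht52]
      have hz0 : z ≤ 0 := by linarith [sq_nonneg (w - 1/3), sq_nonneg (x - 1/3), sq_nonneg (y - 1/3), key, ht0, ht1, ht2, ht3, ht4, ht5, ht6, ht7, ht8, ht9, ht10, ht11, ht12, ht13, ht14, ht15, ht16, ht17, ht18, ht19, ht20, ht21, ht22, ht23, ht24, ht25, ht26, ht27, ht28, ht29, ht30, ht31, ht32, ht33, ht34, ht35, ht36, ht37, ht38, ht39, ht40, ht41, ht42, ht43, ht44, ht45, ht46, ht47, ht48, ht49, ht50, ht51, ht52]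
      have e1 : w = 1/3 := by
        have h := le_antisymm hw3 (sq_nonneg (w - 1/3))
        have := (pow_eq_zero_iff (two_ne_zero)).mp h
        linarith
      have e2 : x = 1/3 := by
        have h := le_antisymm hx3 (sq_nonneg (x - 1/3))
        have := (pow_eq_zero_iff (two_ne_zero)).mp h
        linarith
      have e3 : y = 1/3 := by
        have h := le_antisymm hy3 (sq_nonneg (y - 1/3))
        have := (pow_eq_zero_iff (two_ne_zero)).mp h
        linarith
      exact ⟨e1, e2, e3, le_antisymm hz0 hz⟩
    · rintro ⟨rfl, rfl, rfl, rfl⟩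
      norm_num
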